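/- Let ℤ²₀ = ℤ² \ {0}, ℤ²₊ = {k ∈ ℤ²₀ : k₁ > 0, or k₁ = 0 and k₂ > 0}, ℤ²₋ = −ℤ²₊. For k ∈ ℤ²₀ and x ∈ ℝ², set e_k(x) = √2·cos(2π k·x) if k ∈ ℤ²₊ and e_k(x) = √2·sin(2π k·x) if k ∈ ℤ²₋, and set σ_k(x) = (k⊥/|k|)·e_k(x), where k⊥ = (k₂, −k₁) and |k| is the Euclidean norm. Let θ : ℤ²₀ → ℝ satisfy ∑_{k∈ℤ²₀} θ_k² = 1 and θ_k = θ_l whenever |k| = |l|. Then for every x ∈ ℝ² and every vector v ∈ ℝ², the family (θ_k²·(σ_k(x)·v)²)_{k∈ℤ²₀} is summable and ∑_{k∈ℤ²₀} θ_k² (σ_k(x)·v)² = (1/2)|v|². -/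

import Mathlib

/-- Euclidean norm of a lattice point `k ∈ ℤ²`. -/
noncomputable def latNorm (k : ℤ × ℤ) : ℝ := Real.sqrt ((k.1 : ℝ) ^ 2 + (k.2 : ℝ) ^ 2)

/-- The eigenfunctions `e_k` of the Laplacian on the 2D torus, viewed as 1-periodic
functions on `ℝ²`: `e_k(x) = √2 cos(2π k·x)` for `k ∈ ℤ²₊` and `√2 sin(2π k·x)` for
`k ∈ ℤ²₋`, where `ℤ²₊ = {k : k₁ > 0, or k₁ = 0 and k₂ > 0}`. -/
noncomputable def ek (k : ℤ × ℤ) (x : ℝ × ℝ) : ℝ :=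
  if 0 < k.1 ∨ (k.1 = 0 ∧ 0 < k.2)
  then Real.sqrt 2 * Real.cos (2 * Real.pi * ((k.1 : ℝ) * x.1 + (k.2 : ℝ) * x.2))
  else Real.sqrt 2 * Real.sin (2 * Real.pi * ((k.1 : ℝ) * x.1 + (k.2 : ℝ) * x.2))

/-- The divergence-free vector fields `σ_k(x) = (k⊥/|k|) e_k(x)`, `k⊥ = (k₂, −k₁)`. -/
noncomputable def sigmaVF (k : ℤ × ℤ) (x : ℝ × ℝ) : Fin 2 → ℝ :=
  fun i => (![(k.2 : ℝ), -(k.1 : ℝ)] i / latNorm k) * ek k x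

namespace Stmt5Aux

lemma latNorm_sq (k : ℤ × ℤ) : latNorm k ^ 2 = (k.1 : ℝ) ^ 2 + (k.2 : ℝ) ^ 2 :=
  Real.sq_sqrt (by positivity)

lemma latNorm_pos {k : ℤ × ℤ} (hk : k ≠ 0) : 0 < latNorm k := by
  apply Real.sqrt_pos.2
  rcases k with ⟨a, b⟩
  have : a ≠ 0 ∨ b ≠ 0 := by
    by_contra h; push_neg at h; exact hk (by simp [Prod.ext_iff, h.1, h.2])
  rcases this with h | h
  · have : (0:ℝ) < (a:ℝ)^2 := by positivity
    nlinarith [sq_nonneg ((b:ℝ))]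
  · have : (0:ℝ) < (b:ℝ)^2 := by positivity
    nlinarith [sq_nonneg ((a:ℝ))]

lemma latNorm_neg (k : ℤ × ℤ) : latNorm (-k) = latNorm k := by
  unfold latNorm
  rw [Prod.fst_neg, Prod.snd_neg]
  push_cast
  ring_nf

lemma latNorm_rot (k : ℤ × ℤ) : latNorm (k.2, -k.1) = latNorm k := by
  unfold latNorm
  push_cast
  ring_nf

lemma rot_ne {a b : ℤ} (h : (a, b) ≠ 0) : ((b, -a) : ℤ × ℤ) ≠ 0 := by
  simp only [ne_eq, Prod.ext_iff, Prod.fst_zero, Prod.snd_zero] at h ⊢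
  omega

lemma ek_sq_add {k : ℤ × ℤ} (hk : k ≠ 0) (x : ℝ × ℝ) :
    ek k x ^ 2 + ek (-k) x ^ 2 = 2 := by
  rcases k with ⟨a, b⟩
  have hab : ¬(a = 0 ∧ b = 0) := by
    intro h; exact hk (by simp [Prod.ext_iff, h.1, h.2])
  have h2 : Real.sqrt 2 ^ 2 = 2 := Real.sq_sqrt (by norm_num)
  have hneg : (-((a, b) : ℤ × ℤ)) = (-a, -b) := rfl
  rw [hneg]
  by_cases hP : 0 < a ∨ (a = 0 ∧ 0 < b)
  · have hQ : ¬(0 < -a ∨ (-a = 0 ∧ 0 < -b)) := by omega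
    simp only [ek, hP, hQ, if_pos, if_neg, if_true, if_false]
    push_cast
    have harg : 2 * Real.pi * ((-a : ℝ) * x.1 + (-b : ℝ) * x.2)
        = -(2 * Real.pi * ((a : ℝ) * x.1 + (b : ℝ) * x.2)) := by ring
    rw [harg, Real.sin_neg]
    have := Real.sin_sq_add_cos_sq (2 * Real.pi * ((a : ℝ) * x.1 + (b : ℝ) * x.2))
    nlinarith [this, h2]
  · have hQ : 0 < -a ∨ (-a = 0 ∧ 0 < -b) := by omega
    simp only [ek, hP, hQ, if_pos, if_neg, if_true, if_false]
    push_cast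
    have harg : 2 * Real.pi * ((-a : ℝ) * x.1 + (-b : ℝ) * x.2)
        = -(2 * Real.pi * ((a : ℝ) * x.1 + (b : ℝ) * x.2)) := by ring
    rw [harg, Real.cos_neg]
    have := Real.sin_sq_add_cos_sq (2 * Real.pi * ((a : ℝ) * x.1 + (b : ℝ) * x.2))
    nlinarith [this, h2]

lemma ek_sq_le {k : ℤ × ℤ} (x : ℝ × ℝ) : ek k x ^ 2 ≤ 2 := by
  have h2 : Real.sqrt 2 ^ 2 = 2 := Real.sq_sqrt (by norm_num)
  unfold ek
  split
  · rw [mul_pow, h2]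
    nlinarith [Real.cos_sq_le_one (2 * Real.pi * ((k.1 : ℝ) * x.1 + (k.2 : ℝ) * x.2))]
  · rw [mul_pow, h2]
    nlinarith [Real.sin_sq_le_one (2 * Real.pi * ((k.1 : ℝ) * x.1 + (k.2 : ℝ) * x.2))]

/-- σ_k(x)·v as a product. -/
lemma sigma_dot (k : ℤ × ℤ) (x : ℝ × ℝ) (v : Fin 2 → ℝ) :
    (∑ i : Fin 2, sigmaVF k x i * v i)
      = (((k.2 : ℝ) * v 0 - (k.1 : ℝ) * v 1) / latNorm k) * ek k x := by
  simp [sigmaVF, Fin.sum_univ_two]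
  ring

def nuE : {k : ℤ × ℤ // k ≠ 0} ≃ {k : ℤ × ℤ // k ≠ 0} where
  toFun k := ⟨-k.1, neg_ne_zero.2 k.2⟩
  invFun k := ⟨-k.1, neg_ne_zero.2 k.2⟩
  left_inv k := by simp
  right_inv k := by simp

def rhoE : {k : ℤ × ℤ // k ≠ 0} ≃ {k : ℤ × ℤ // k ≠ 0} where
  toFun k := ⟨(k.1.2, -k.1.1), by
    have h := k.2
    simp only [ne_eq, Prod.ext_iff, Prod.fst_zero, Prod.snd_zero] at h ⊢
    omega⟩
  invFun k := ⟨(-k.1.2, k.1.1), by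
    have h := k.2
    simp only [ne_eq, Prod.ext_iff, Prod.fst_zero, Prod.snd_zero] at h ⊢
    omega⟩
  left_inv k := by rcases k with ⟨⟨a, b⟩, h⟩; simp
  right_inv k := by rcases k with ⟨⟨a, b⟩, h⟩; simp

end Stmt5Aux

set_option maxHeartbeats 1600000

open Stmt5Aux in
/-- Quadratic-form version of the covariance identity: under the
assumptions `∑ θ_k² = 1` and `θ_k = θ_l` for `|k| = |l|`, for every `x, v ∈ ℝ²` one has
`∑_k θ_k² (σ_k(x)·v)² = (1/2)|v|²`. -/
theorem stmt_5 (θ : {k : ℤ × ℤ // k ≠ 0} → ℝ)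
    (hθ1 : HasSum (fun k : {k : ℤ × ℤ // k ≠ 0} => θ k ^ 2) 1)
    (hθ2 : ∀ k l : {k : ℤ × ℤ // k ≠ 0}, latNorm k.1 = latNorm l.1 → θ k = θ l)
    (x : ℝ × ℝ) (v : Fin 2 → ℝ) :
    HasSum (fun k : {k : ℤ × ℤ // k ≠ 0} =>
        θ k ^ 2 * (∑ i : Fin 2, sigmaVF k.1 x i * v i) ^ 2)
      ((1/2) * ∑ i : Fin 2, v i ^ 2) := by
  set f : {k : ℤ × ℤ // k ≠ 0} → ℝ := fun k =>
    θ k ^ 2 * (∑ i : Fin 2, sigmaVF k.1 x i * v i) ^ 2 with hf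
  -- summability of f by comparison
  have hbound : ∀ k : {k : ℤ × ℤ // k ≠ 0},
      f k ≤ θ k ^ 2 * (2 * (v 0 ^ 2 + v 1 ^ 2)) := by
    intro k
    rw [hf]
    dsimp only
    rw [sigma_dot]
    have hn := latNorm_pos k.2
    have hn2 := latNorm_sq k.1
    have he := ek_sq_le (k := k.1) x
    have hCS : ((k.1.2 : ℝ) * v 0 - (k.1.1 : ℝ) * v 1) ^ 2
        ≤ latNorm k.1 ^ 2 * (v 0 ^ 2 + v 1 ^ 2) := by
      rw [hn2]
      nlinarith [sq_nonneg ((k.1.1 : ℝ) * v 0 + (k.1.2 : ℝ) * v 1)]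
    have key : ((((k.1.2 : ℝ) * v 0 - (k.1.1 : ℝ) * v 1) / latNorm k.1) * ek k.1 x) ^ 2
        ≤ 2 * (v 0 ^ 2 + v 1 ^ 2) := by
      rw [mul_pow, div_pow]
      have h1 : ((k.1.2 : ℝ) * v 0 - (k.1.1 : ℝ) * v 1) ^ 2 / latNorm k.1 ^ 2
          ≤ v 0 ^ 2 + v 1 ^ 2 := by
        rw [div_le_iff₀ (by positivity : (0:ℝ) < latNorm k.1 ^ 2)]
        nlinarith [hCS]
      calc ((k.1.2 : ℝ) * v 0 - (k.1.1 : ℝ) * v 1) ^ 2 / latNorm k.1 ^ 2 * ek k.1 x ^ 2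
          ≤ (v 0 ^ 2 + v 1 ^ 2) * 2 :=
            mul_le_mul h1 he (sq_nonneg _) (by positivity)
        _ = 2 * (v 0 ^ 2 + v 1 ^ 2) := by ring
    exact mul_le_mul_of_nonneg_left key (sq_nonneg (θ k))
  have hfnn : ∀ k, 0 ≤ f k := fun k => by
    rw [hf]; positivity
  have hsumf : Summable f :=
    Summable.of_nonneg_of_le hfnn hbound
      ((hθ1.summable).mul_right _)
  set S := ∑' k, f k with hS
  have hSf : HasSum f S := hsumf.hasSum
  -- sums over the three transformed copies
  have h1 : HasSum (fun k => f (nuE k)) S := (nuE.hasSum_iff).2 hSf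
  have h2 : HasSum (fun k => f (rhoE k)) S := (rhoE.hasSum_iff).2 hSf
  have h3 : HasSum (fun k => f (nuE (rhoE k))) S := ((rhoE.trans nuE).hasSum_iff).2 hSf
  have h4 : HasSum (fun k => f k + f (nuE k) + f (rhoE k) + f (nuE (rhoE k)))
      (S + S + S + S) := ((hSf.add h1).add h2).add h3
  -- pointwise identity
  have hpt : ∀ k : {k : ℤ × ℤ // k ≠ 0},
      f k + f (nuE k) + f (rhoE k) + f (nuE (rhoE k))
        = 4 * (θ k ^ 2 * ((1/2) * (v 0 ^ 2 + v 1 ^ 2))) := by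
    intro k
    have hθν : θ (nuE k) = θ k := hθ2 _ _ (by
      show latNorm (-k.1) = latNorm k.1
      exact latNorm_neg k.1)
    have hθρ : θ (rhoE k) = θ k := hθ2 _ _ (by
      show latNorm (k.1.2, -k.1.1) = latNorm k.1
      exact latNorm_rot k.1)
    have hθνρ : θ (nuE (rhoE k)) = θ k := hθ2 _ _ (by
      show latNorm (-(k.1.2, -k.1.1)) = latNorm k.1
      rw [latNorm_neg]; exact latNorm_rot k.1)
    have hek : ek k.1 x ^ 2 + ek (-k.1) x ^ 2 = 2 := ek_sq_add k.2 x
    have hekρ : ek (k.1.2, -k.1.1) x ^ 2 + ek (-(k.1.2, -k.1.1)) x ^ 2 = 2 := by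
      apply ek_sq_add _ x
      rcases k with ⟨⟨a, b⟩, h⟩
      exact rot_ne h
    have hn := latNorm_pos k.2
    have hn2 := latNorm_sq k.1
    have hnν : latNorm ((nuE k).1) = latNorm k.1 := latNorm_neg k.1
    have hnρ : latNorm ((rhoE k).1) = latNorm k.1 := latNorm_rot k.1
    have hnνρ : latNorm ((nuE (rhoE k)).1) = latNorm k.1 := by
      show latNorm (-(k.1.2, -k.1.1)) = latNorm k.1
      rw [latNorm_neg]; exact latNorm_rot k.1
    rw [hf]
    dsimp only
    rw [sigma_dot, sigma_dot, sigma_dot, sigma_dot, hθν, hθρ, hθνρ, hnν, hnρ, hnνρ]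
    have hcoords : ((nuE k).1 : ℤ × ℤ) = -k.1 := rfl
    have hcρ : ((rhoE k).1 : ℤ × ℤ) = (k.1.2, -k.1.1) := rfl
    have hcνρ : ((nuE (rhoE k)).1 : ℤ × ℤ) = -(k.1.2, -k.1.1) := rfl
    rw [hcoords, hcρ, hcνρ]
    simp only [Prod.neg_mk, neg_neg, Prod.fst_neg, Prod.snd_neg]
    push_cast
    have hne : latNorm k.1 ≠ 0 := ne_of_gt hn
    simp only [Prod.neg_mk, neg_neg] at hekρ
    field_simp
    linear_combination (2 * θ k ^ 2 * ((k.1.2 : ℝ) * v 0 - (k.1.1 : ℝ) * v 1) ^ 2) * hek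
      + (2 * θ k ^ 2 * ((k.1.1 : ℝ) * v 0 + (k.1.2 : ℝ) * v 1) ^ 2) * hekρ
      - (4 * θ k ^ 2 * (v 0 ^ 2 + v 1 ^ 2)) * hn2
  -- sum of the RHS family
  have hrhs : HasSum (fun k => 4 * (θ k ^ 2 * ((1/2) * (v 0 ^ 2 + v 1 ^ 2))))
      (4 * (1 * ((1/2) * (v 0 ^ 2 + v 1 ^ 2)))) :=
    (hθ1.mul_right _).mul_left 4
  have h4' : HasSum (fun k => f k + f (nuE k) + f (rhoE k) + f (nuE (rhoE k)))
      (4 * (1 * ((1/2) * (v 0 ^ 2 + v 1 ^ 2)))) := by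
    rw [funext hpt]; exact hrhs
  have hSS : S + S + S + S = 4 * (1 * ((1/2) * (v 0 ^ 2 + v 1 ^ 2))) := h4.unique h4'
  have hSval : S = (1/2) * (v 0 ^ 2 + v 1 ^ 2) := by linarith
  have hgoal : (1/2 : ℝ) * ∑ i : Fin 2, v i ^ 2 = S := by
    rw [hSval, Fin.sum_univ_two]
  rw [hgoal]; exact hSf
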